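/- arXiv:1402.0344 — 2 statements merged into one kernel-verified Lean document; each statement's English description precedes it below -/
import Mathlib

section
/- Let f be a prime and D a discriminant. If two primitive forms Q₁, Q₂ of discriminant Df² are semi-equivalent, then there exist a single primitive form q of discriminant D, integers 0 ≤ g₁, g₂ ≤ f, and U₁, U₂ ∈ SL₂(ℤ) with Qᵢ = q · R_{gᵢ} · Uᵢ for i = 1, 2. -/
/-- An integral binary quadratic form ax² + bxy + cy². -/
structure BQF where
  a : ℤ
  b : ℤ
  c : ℤ

namespace BQF

/-- Value of the form at (x, y). -/
def eval (q : BQF) (x y : ℤ) : ℤ := q.a * x ^ 2 + q.b * x * y + q.c * y ^ 2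

/-- Discriminant b² - 4ac. -/
def disc (q : BQF) : ℤ := q.b ^ 2 - 4 * q.a * q.c

/-- A form is primitive if gcd(a, b, c) = 1. -/
def IsPrimitive (q : BQF) : Prop := Int.gcd (Int.gcd q.a q.b) q.c = 1

/-- Right action: (q·M)(x,y) = q(px + ry, sx + ty) for M = [[p,r],[s,t]]. -/
def act (q : BQF) (M : Matrix (Fin 2) (Fin 2) ℤ) : BQF :=
  ⟨q.eval (M 0 0) (M 1 0),
   q.eval (M 0 0 + M 0 1) (M 1 0 + M 1 1) - q.eval (M 0 0) (M 1 0) - q.eval (M 0 1) (M 1 1),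
   q.eval (M 0 1) (M 1 1)⟩

/-- Proper equivalence: equivalence under the SL₂(ℤ) action. -/
def ProperEquiv (q q' : BQF) : Prop :=
  ∃ U : Matrix.SpecialLinearGroup (Fin 2) ℤ, q.act U.1 = q'

end BQF

/-- R_g = [[f,g],[0,1]] for g < f, and R_f = [[1,0],[0,f]] when g = f. -/
def Rmat (f g : ℤ) : Matrix (Fin 2) (Fin 2) ℤ :=
  if g = f then !![1, 0; 0, f] else !![f, g; 0, 1]

/-- A discriminant: a non-square integer congruent to 0 or 1 mod 4. -/
def IsDiscriminant (D : ℤ) : Prop := ¬ IsSquare D ∧ (D % 4 = 0 ∨ D % 4 = 1)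

/-- A fundamental discriminant. -/
def IsFundamental (D : ℤ) : Prop :=
  (D % 4 = 1 ∧ Squarefree D) ∨
  (D % 4 = 0 ∧ Squarefree (D / 4) ∧ (D / 4 % 4 = 2 ∨ D / 4 % 4 = 3))

/-- Semi-equivalence of forms of discriminant Df². -/
def SemiEquiv (f D : ℤ) (Q₁ Q₂ : BQF) : Prop :=
  ∃ q₁ q₂ : BQF, ∃ g₁ g₂ : ℤ, ∃ U₁ U₂ : Matrix.SpecialLinearGroup (Fin 2) ℤ,
    q₁.IsPrimitive ∧ q₂.IsPrimitive ∧ q₁.disc = D ∧ q₂.disc = D ∧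
    BQF.ProperEquiv q₁ q₂ ∧ 0 ≤ g₁ ∧ g₁ ≤ f ∧ 0 ≤ g₂ ∧ g₂ ≤ f ∧
    Q₁ = q₁.act (Rmat f g₁ * U₁.1) ∧ Q₂ = q₂.act (Rmat f g₂ * U₂.1)


lemma act_mul (q : BQF) (M N : Matrix (Fin 2) (Fin 2) ℤ) :
    q.act (M * N) = (q.act M).act N := by
  simp only [BQF.act, BQF.eval, Matrix.mul_apply, Fin.sum_univ_two]
  refine BQF.mk.injEq _ _ _ _ _ _ ▸ ?_
  constructor
  · ring
  constructor <;> ring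

lemma hnf (f : ℕ) (hf : f.Prime) (M : Matrix (Fin 2) (Fin 2) ℤ) (hdet : M.det = f) :
    ∃ g : ℤ, ∃ U : Matrix.SpecialLinearGroup (Fin 2) ℤ,
      0 ≤ g ∧ g ≤ f ∧ M = Rmat f g * U.1 := by
  set a := M 0 0 with ha
  set b := M 0 1 with hb
  set c := M 1 0 with hc
  set d := M 1 1 with hd
  have hM : M = !![a, b; c, d] := by rw [Matrix.eta_fin_two M]
  have hdet2 : a * d - b * c = f := by rw [Matrix.det_fin_two] at hdet; linarith
  have hfpos : (0:ℤ) < f := by exact_mod_cast hf.pos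
  have he : (Int.gcd c d : ℤ) ∣ (f : ℤ) := by
    rw [← hdet2]
    exact dvd_sub (Dvd.dvd.mul_left (Int.gcd_dvd_right c d) a)
      (Dvd.dvd.mul_left (Int.gcd_dvd_left c d) b)
  have he' : Int.gcd c d ∣ f := Int.ofNat_dvd.mp (by exact_mod_cast he)
  rcases (Nat.dvd_prime hf).mp he' with h1 | hfe
  · -- gcd(c,d) = 1
    have hcop : IsCoprime c d := Int.isCoprime_iff_gcd_eq_one.mpr h1
    obtain ⟨u, v, huv⟩ := hcop
    -- u*c + v*d = 1
    set g₀ := b * v + a * u with hg0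
    have hgc : g₀ * c = a - v * f := by
      rw [hg0]; linear_combination a * huv - v * hdet2
    have hgd : g₀ * d = b + u * f := by
      rw [hg0]; linear_combination b * huv + u * hdet2
    set g := g₀ % f with hg
    have hg0' : g₀ = f * (g₀ / f) + g := (Int.mul_ediv_add_emod g₀ f).symm
    set k := g₀ / f with hk
    have hgnn : 0 ≤ g := Int.emod_nonneg g₀ (by positivity)
    have hglt : g < f := Int.emod_lt_of_pos g₀ hfpos
    set p := v + k * c with hp
    set q := k * d - u with hq
    have hpa : f * p + g * c = a := by
      have : g * c = g₀ * c - f * k * c := by rw [hg0']; ring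
      rw [hp]; rw [this, hgc]; ring
    have hqb : f * q + g * d = b := by
      have : g * d = g₀ * d - f * k * d := by rw [hg0']; ring
      rw [hq]; rw [this, hgd]; ring
    have hUdet : p * d - q * c = 1 := by
      have : p * d - q * c = v * d + u * c + k * (c * d - d * c) := by rw [hp, hq]; ring
      rw [this]; linarith
    refine ⟨g, ⟨!![p, q; c, d], ?_⟩, hgnn, le_of_lt hglt, ?_⟩
    · rw [Matrix.det_fin_two_of]; linarith
    · rw [hM, Rmat, if_neg (by omega)]
      rw [show (!![(f:ℤ), g; 0, 1] : Matrix (Fin 2) (Fin 2) ℤ) * !![p, q; c, d]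
          = !![f*p + g*c, f*q + g*d; 0*p + 1*c, 0*q + 1*d] from Matrix.mul_fin_two ..]
      rw [hpa, hqb]; norm_num
  · -- gcd(c,d) = f
    have hfc : (f:ℤ) ∣ c := hfe ▸ Int.gcd_dvd_left c d
    have hfd : (f:ℤ) ∣ d := hfe ▸ Int.gcd_dvd_right c d
    obtain ⟨c', hc'⟩ := hfc
    obtain ⟨d', hd'⟩ := hfd
    have hUdet : a * d' - b * c' = 1 := by
      have key : (f:ℤ) * (a * d' - b * c') = (f:ℤ) * 1 := by
        linear_combination hdet2 - a * hd' + b * hc'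
      exact mul_left_cancel₀ (ne_of_gt hfpos) key
    refine ⟨f, ⟨!![a, b; c', d'], ?_⟩, by positivity, le_refl _, ?_⟩
    · rw [Matrix.det_fin_two_of]; linarith
    · rw [hM, Rmat, if_pos rfl]
      rw [show (!![(1:ℤ), 0; 0, f] : Matrix (Fin 2) (Fin 2) ℤ) * !![a, b; c', d']
          = !![1*a + 0*c', 1*b + 0*d'; 0*a + f*c', 0*b + f*d'] from Matrix.mul_fin_two ..]
      rw [hc', hd']; norm_num

theorem stmt12 (f : ℕ) (hf : f.Prime) (D : ℤ)
    (hD : IsDiscriminant D) (Q₁ Q₂ : BQF) (h₁ : Q₁.IsPrimitive) (h₂ : Q₂.IsPrimitive)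
    (hd₁ : Q₁.disc = D * f ^ 2) (hd₂ : Q₂.disc = D * f ^ 2)
    (hse : SemiEquiv f D Q₁ Q₂) :
    ∃ q : BQF, ∃ g₁ g₂ : ℤ, ∃ U₁ U₂ : Matrix.SpecialLinearGroup (Fin 2) ℤ,
      q.IsPrimitive ∧ q.disc = D ∧ 0 ≤ g₁ ∧ g₁ ≤ f ∧ 0 ≤ g₂ ∧ g₂ ≤ f ∧
      Q₁ = q.act (Rmat f g₁ * U₁.1) ∧ Q₂ = q.act (Rmat f g₂ * U₂.1) := by
  obtain ⟨q₁, q₂, g₁, g₂, U₁, U₂, hp₁, hp₂, hD₁, hD₂, ⟨V, hV⟩,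
    hg₁0, hg₁f, hg₂0, hg₂f, hQ₁, hQ₂⟩ := hse
  have hRdet : (Rmat f g₂).det = f := by
    rw [Rmat]
    split_ifs <;> simp [Matrix.det_fin_two_of]
  have hdetM : (V.1 * Rmat f g₂).det = f := by
    rw [Matrix.det_mul, V.2, one_mul, hRdet]
  obtain ⟨g₂', U', hg0', hgf', hMeq⟩ := hnf f hf (V.1 * Rmat f g₂) hdetM
  refine ⟨q₁, g₁, g₂', U₁, U' * U₂, hp₁, hD₁, hg₁0, hg₁f, hg0', hgf', hQ₁, ?_⟩
  rw [hQ₂, ← hV, ← act_mul, ← mul_assoc, hMeq,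
    Matrix.SpecialLinearGroup.coe_mul, mul_assoc]
end

section
/- Let D be a discriminant and f an odd prime. The map sending the class of a primitive form Q of discriminant Df² to the class of a primitive form q of discriminant D with q·R_f properly equivalent to Q is a well-defined surjection π from proper equivalence classes of primitive forms of discriminant Df² onto proper equivalence classes of primitive forms of discriminant D. -/
namespace BQF

lemma act_mul (q : BQF) (M N : Matrix (Fin 2) (Fin 2) ℤ) : (q.act M).act N = q.act (M * N) := by
  simp only [act, eval, Matrix.mul_apply, Fin.sum_univ_two, mk.injEq]
  refine ⟨by ring, by ring, by ring⟩

lemma act_one (q : BQF) : q.act 1 = q := by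
  cases q; simp [act, eval, Matrix.one_apply]; ring_nf

lemma disc_act (q : BQF) (M : Matrix (Fin 2) (Fin 2) ℤ) :
    (q.act M).disc = M.det ^ 2 * q.disc := by
  simp only [act, eval, disc, Matrix.det_fin_two]
  ring

lemma pe_refl (q : BQF) : ProperEquiv q q := ⟨1, by simpa using act_one q⟩

lemma pe_symm {q q' : BQF} (h : ProperEquiv q q') : ProperEquiv q' q := by
  obtain ⟨U, hU⟩ := h
  exact ⟨U⁻¹, by rw [← hU, act_mul, ← Matrix.SpecialLinearGroup.coe_mul, mul_inv_cancel,
    Matrix.SpecialLinearGroup.coe_one, act_one]⟩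

lemma pe_trans {q q' q'' : BQF} (h : ProperEquiv q q') (h' : ProperEquiv q' q'') :
    ProperEquiv q q'' := by
  obtain ⟨U, hU⟩ := h; obtain ⟨V, hV⟩ := h'
  exact ⟨U * V, by rw [Matrix.SpecialLinearGroup.coe_mul, ← act_mul, hU, hV]⟩

lemma gcd_dvd_act (q : BQF) (M : Matrix (Fin 2) (Fin 2) ℤ) :
    Int.gcd (Int.gcd q.a q.b) q.c ∣ Int.gcd (Int.gcd (q.act M).a (q.act M).b) (q.act M).c := by
  set d : ℤ := (Int.gcd (Int.gcd q.a q.b) q.c : ℤ) with hd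
  have h1 : d ∣ (Int.gcd q.a q.b : ℤ) := (Int.gcd_dvd_left _ _)
  have ha : d ∣ q.a := h1.trans (Int.gcd_dvd_left _ _)
  have hb : d ∣ q.b := h1.trans (Int.gcd_dvd_right _ _)
  have hc : d ∣ q.c := (Int.gcd_dvd_right _ _)
  have key : ∀ x y, d ∣ q.eval x y := fun x y =>
    dvd_add (dvd_add (ha.mul_right _) ((hb.mul_right x).mul_right y)) (hc.mul_right _)
  have : d ∣ (Int.gcd (Int.gcd (q.act M).a (q.act M).b) (q.act M).c : ℤ) :=
    Int.dvd_coe_gcd (Int.dvd_coe_gcd (key _ _) (dvd_sub (dvd_sub (key _ _) (key _ _)) (key _ _))) (key _ _)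
  exact Int.natCast_dvd_natCast.mp this

lemma ext' {q q' : BQF} (h1 : q.a = q'.a) (h2 : q.b = q'.b) (h3 : q.c = q'.c) : q = q' := by
  cases q; cases q'; simp_all

lemma isPrimitive_pe {q q' : BQF} (h : ProperEquiv q q') (hq : q.IsPrimitive) :
    q'.IsPrimitive := by
  obtain ⟨U, hU⟩ := pe_symm h
  have h1 := gcd_dvd_act q' U.1
  rw [hU, hq] at h1
  exact Nat.dvd_one.mp h1

lemma act_R (q : BQF) (F : ℤ) :
    q.act !![1, 0; 0, F] = ⟨q.a, q.b * F, q.c * F ^ 2⟩ := by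
  refine ext' ?_ ?_ ?_ <;> simp [act, eval] <;> ring

lemma not_dvd_a {F : ℤ} (hp : Prime F) {q : BQF}
    (h : (q.act !![1, 0; 0, F]).IsPrimitive) : ¬ F ∣ q.a := by
  intro hdvd
  rw [act_R] at h
  have : F ∣ (Int.gcd (Int.gcd q.a (q.b * F)) (q.c * F ^ 2) : ℤ) :=
    Int.dvd_coe_gcd (Int.dvd_coe_gcd hdvd (Dvd.intro_left _ rfl)) ⟨q.c * F, by ring⟩
  rw [IsPrimitive] at h
  simp only [h] at this
  exact hp.not_unit (isUnit_of_dvd_one (by exact_mod_cast this))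

lemma prim_act_R {F : ℤ} (hp : Prime F) {q : BQF} (hq : q.IsPrimitive)
    (ha : ¬ F ∣ q.a) : (q.act !![1, 0; 0, F]).IsPrimitive := by
  rw [act_R, IsPrimitive]
  set g : ℤ := (Int.gcd (Int.gcd q.a (q.b * F)) (q.c * F ^ 2) : ℤ) with hg
  have h1 : g ∣ (Int.gcd q.a (q.b * F) : ℤ) := (Int.gcd_dvd_left _ _)
  have hga : g ∣ q.a := h1.trans (Int.gcd_dvd_left _ _)
  have hgbF : g ∣ q.b * F := h1.trans (Int.gcd_dvd_right _ _)
  have hgcF : g ∣ q.c * F ^ 2 := (Int.gcd_dvd_right _ _)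
  have hco : IsCoprime F g := by
    rw [hp.coprime_iff_not_dvd]
    intro hFg
    exact ha (hFg.trans hga)
  have hgb : g ∣ q.b := (hco.symm.dvd_of_dvd_mul_right hgbF)
  have hgc : g ∣ q.c := (hco.symm.pow_right.dvd_of_dvd_mul_right hgcF)
  have : g ∣ (Int.gcd (Int.gcd q.a q.b) q.c : ℤ) :=
    Int.dvd_coe_gcd (Int.dvd_coe_gcd hga hgb) hgc
  rw [hq, hg] at this
  exact Nat.dvd_one.mp (by exact_mod_cast this)

lemma descend {F : ℤ} (hp : Prime F) {q q' : BQF} (hq : ¬ F ∣ q.a)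
    (h : ProperEquiv (q.act !![1, 0; 0, F]) (q'.act !![1, 0; 0, F])) : ProperEquiv q q' := by
  obtain ⟨U, hU⟩ := h
  rw [act_mul] at hU
  have hdet : U.1 0 0 * U.1 1 1 - U.1 0 1 * U.1 1 0 = 1 := by
    have := U.2; rwa [Matrix.det_fin_two] at this
  set p := U.1 0 0 with hP
  set r := U.1 0 1 with hR
  set s := U.1 1 0 with hS
  set t := U.1 1 1 with hT
  have hprod : !![1, 0; 0, F] * U.1 = !![p, r; F * s, F * t] := by
    ext i j
    fin_cases i <;> fin_cases j <;>
      simp [Matrix.mul_apply, Fin.sum_univ_two, hP, hR, hS, hT]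
  rw [hprod] at hU
  -- compare c-coefficients
  have hcc : q.a * r ^ 2 + q.b * r * (F * t) + q.c * (F * t) ^ 2 = q'.c * F ^ 2 := by
    have := congrArg BQF.c hU
    rw [act_R] at this
    simpa [act, eval] using this
  have hFr : F ∣ r := by
    have h1 : F ∣ q.a * r ^ 2 := by
      have : q.a * r ^ 2 = q'.c * F ^ 2 - q.b * r * (F * t) - q.c * (F * t) ^ 2 := by
        linarith [hcc]
      rw [this]
      exact dvd_sub (dvd_sub ⟨q'.c * F, by ring⟩ ⟨q.b * (r * t), by ring⟩) ⟨q.c * F * t ^ 2, by ring⟩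
    rcases hp.dvd_mul.mp h1 with h | h
    · exact absurd h hq
    · exact hp.dvd_of_dvd_pow h
  obtain ⟨r', hr'⟩ := hFr
  have hdet' : p * t - r' * (F * s) = 1 := by rw [hr'] at hdet; linarith
  refine ⟨⟨!![p, r'; F * s, t], by rw [Matrix.det_fin_two_of]; linarith⟩, ?_⟩
  have hMR : !![p, r'; F * s, t] * !![1, 0; 0, F] = !![p, r; F * s, F * t] := by
    ext i j
    fin_cases i <;> fin_cases j <;>
      simp [Matrix.mul_apply, Fin.sum_univ_two, hr'] <;> ring
  have key : (q.act !![p, r'; F * s, t]).act !![1, 0; 0, F] = q'.act !![1, 0; 0, F] := by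
    rw [act_mul, hMR, hU]
  have hF0 : F ≠ 0 := hp.ne_zero
  rw [act_R, act_R] at key
  injection key with k1 k2 k3
  show q.act !![p, r'; F * s, t] = q'
  exact ext' k1 (mul_right_cancel₀ hF0 k2) (mul_right_cancel₀ (pow_ne_zero 2 hF0) k3)

lemma exists_good {F : ℤ} (hp : Prime F) {q : BQF} (hq : q.IsPrimitive) :
    ∃ U : Matrix.SpecialLinearGroup (Fin 2) ℤ, ¬ F ∣ (q.act U.1).a := by
  by_cases ha : ¬ F ∣ q.a
  · exact ⟨1, by rw [Matrix.SpecialLinearGroup.coe_one, act_one]; exact ha⟩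
  push_neg at ha
  by_cases hc : ¬ F ∣ q.c
  · refine ⟨⟨!![0, -1; 1, 0], by rw [Matrix.det_fin_two_of]; ring⟩, ?_⟩
    have : (q.act !![0, -1; 1, 0]).a = q.c := by simp [act, eval]
    rw [this]; exact hc
  push_neg at hc
  have hb : ¬ F ∣ q.b := by
    intro hb
    have : F ∣ (Int.gcd (Int.gcd q.a q.b) q.c : ℤ) := Int.dvd_coe_gcd (Int.dvd_coe_gcd ha hb) hc
    rw [hq] at this
    exact hp.not_unit (isUnit_of_dvd_one (by exact_mod_cast this))
  refine ⟨⟨!![1, -1; 1, 0], by rw [Matrix.det_fin_two_of]; ring⟩, ?_⟩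
  have : (q.act !![1, -1; 1, 0]).a = q.a + q.b + q.c := by simp [act, eval]
  rw [this]
  intro hd
  refine hb ?_
  have hq2 : q.b = q.a + q.b + q.c - q.a - q.c := by ring
  rw [hq2]
  exact dvd_sub (dvd_sub hd ha) hc


lemma step1 (D : ℤ) (f : ℕ) (hf : f.Prime) (hodd : Odd f) {Q : BQF}
    (hQ : Q.IsPrimitive) (hd : Q.disc = D * (f : ℤ) ^ 2) :
    ∃ q : BQF, q.IsPrimitive ∧ q.disc = D ∧
      ProperEquiv (q.act !![1, 0; 0, (f : ℤ)]) Q := by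
  have hpF : Prime ((f : ℕ) : ℤ) := Nat.prime_iff_prime_int.mp hf
  have hF0 : ((f : ℤ)) ≠ 0 := hpF.ne_zero
  have hf2 : ¬ ((f : ℤ)) ∣ 2 := by
    intro h
    have h2 : f ∣ 2 := by exact_mod_cast h
    have := (Nat.prime_dvd_prime_iff_eq hf Nat.prime_two).mp h2
    rw [this] at hodd
    exact (by decide : ¬ Odd 2) hodd
  obtain ⟨U, hU⟩ := exists_good hpF hQ
  set Q1 := Q.act U.1 with hQ1
  have hQ1p : Q1.IsPrimitive := isPrimitive_pe ⟨U, rfl⟩ hQ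
  have hQ1d : Q1.disc = D * (f : ℤ) ^ 2 := by
    rw [hQ1, disc_act, U.2, one_pow, one_mul, hd]
  -- the key prime-divisibility helper
  have h4a : ∀ x : ℤ, (f : ℤ) ∣ 4 * Q1.a * x → (f : ℤ) ∣ x := by
    intro x hx
    rcases hpF.dvd_mul.mp hx with h | h
    · rcases hpF.dvd_mul.mp h with h' | h'
      · exfalso
        have : (4 : ℤ) = 2 ^ 2 := by norm_num
        rw [this] at h'
        exact hf2 (hpF.dvd_of_dvd_pow h')
      · exact absurd h' hU
    · exact h
  -- choose translation t with f ∣ b + 2at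
  haveI := Fact.mk hf
  have ha0 : ((Q1.a : ZMod f)) ≠ 0 := by
    rw [Ne, ZMod.intCast_zmod_eq_zero_iff_dvd]
    exact hU
  have h20 : ((2 : ZMod f)) ≠ 0 := by
    intro h2
    have h3 : ((2 : ℤ) : ZMod f) = 0 := by push_cast; exact h2
    rw [ZMod.intCast_zmod_eq_zero_iff_dvd] at h3
    exact hf2 h3
  have h2a0 : (2 * (Q1.a : ZMod f)) ≠ 0 := mul_ne_zero h20 ha0
  obtain ⟨t, ht⟩ := ZMod.intCast_surjective (-(Q1.b : ZMod f) * (2 * (Q1.a : ZMod f))⁻¹)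
  have hb : (f : ℤ) ∣ Q1.b + 2 * Q1.a * t := by
    rw [← ZMod.intCast_zmod_eq_zero_iff_dvd]
    push_cast
    rw [ht]
    field_simp
    ring
  set T : Matrix (Fin 2) (Fin 2) ℤ := !![1, t; 0, 1] with hT
  have hTdet : T.det = 1 := by rw [hT, Matrix.det_fin_two_of]; ring
  set Q2 := Q1.act T with hQ2def
  have hQ2 : Q2 = ⟨Q1.a, Q1.b + 2 * Q1.a * t, Q1.a * t ^ 2 + Q1.b * t + Q1.c⟩ := by
    rw [hQ2def, hT]
    refine ext' ?_ ?_ ?_ <;> simp [act, eval] <;> ring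
  have hQ2p : Q2.IsPrimitive :=
    isPrimitive_pe ⟨⟨T, hTdet⟩, rfl⟩ hQ1p
  have hQ2d : Q2.disc = D * (f : ℤ) ^ 2 := by
    rw [hQ2def, disc_act, hTdet, one_pow, one_mul, hQ1d]
  have hQ2a : Q2.a = Q1.a := by rw [hQ2]
  obtain ⟨b3, hb3⟩ : (f : ℤ) ∣ Q2.b := by rw [hQ2]; exact hb
  have hkey : 4 * Q1.a * Q2.c = (f : ℤ) ^ 2 * (b3 ^ 2 - D) := by
    have h1 : Q2.b ^ 2 - 4 * Q2.a * Q2.c = D * (f : ℤ) ^ 2 := hQ2d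
    rw [hb3, hQ2a] at h1
    ring_nf at h1 ⊢
    linarith
  obtain ⟨c3, hc3⟩ : (f : ℤ) ∣ Q2.c := h4a _ (by rw [hkey]; exact ⟨(f : ℤ) * (b3 ^ 2 - D), by ring⟩)
  have hkey2 : 4 * Q1.a * c3 = (f : ℤ) * (b3 ^ 2 - D) := by
    have : (f : ℤ) * (4 * Q1.a * c3) = (f : ℤ) * ((f : ℤ) * (b3 ^ 2 - D)) := by
      have := hkey
      rw [hc3] at this
      linarith [this]
    exact mul_left_cancel₀ hF0 this
  obtain ⟨c4, hc4⟩ : (f : ℤ) ∣ c3 := h4a _ (by rw [hkey2]; exact Dvd.intro _ rfl)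
  have hkey3 : 4 * Q1.a * c4 = b3 ^ 2 - D := by
    have : (f : ℤ) * (4 * Q1.a * c4) = (f : ℤ) * (b3 ^ 2 - D) := by
      rw [← hkey2, hc4]; ring
    exact mul_left_cancel₀ hF0 this
  refine ⟨⟨Q1.a, b3, c4⟩, ?_, ?_, ?_⟩
  · -- primitive
    rw [IsPrimitive]
    set g : ℤ := (Int.gcd (Int.gcd Q1.a b3) c4 : ℤ) with hg
    have h1 : g ∣ (Int.gcd Q1.a b3 : ℤ) := (Int.gcd_dvd_left _ _)
    have hga : g ∣ Q2.a := by rw [hQ2a]; exact h1.trans (Int.gcd_dvd_left _ _)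
    have hgb : g ∣ Q2.b := by rw [hb3]; exact Dvd.dvd.mul_left (h1.trans (Int.gcd_dvd_right _ _)) _
    have hgc : g ∣ Q2.c := by
      rw [hc3, hc4]
      exact Dvd.dvd.mul_left (Dvd.dvd.mul_left (Int.gcd_dvd_right _ _) _) _
    have h2 : g ∣ (Int.gcd (Int.gcd Q2.a Q2.b) Q2.c : ℤ) :=
      Int.dvd_coe_gcd (Int.dvd_coe_gcd hga hgb) hgc
    rw [hQ2p, hg] at h2
    exact Nat.dvd_one.mp (by exact_mod_cast h2)
  · -- disc
    show b3 ^ 2 - 4 * Q1.a * c4 = D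
    linarith [hkey3]
  · -- proper equivalence
    have heq : BQF.act ⟨Q1.a, b3, c4⟩ !![1, 0; 0, (f : ℤ)] = Q2 := by
      rw [act_R]
      exact ext' hQ2a.symm (by rw [hb3]; ring) (by rw [hc3, hc4]; ring)
    rw [heq]
    have h1 : ProperEquiv Q Q2 := by
      refine ⟨U * (show Matrix.SpecialLinearGroup (Fin 2) ℤ from ⟨T, hTdet⟩), ?_⟩
      rw [Matrix.SpecialLinearGroup.coe_mul, ← act_mul, ← hQ1, ← hQ2def]
    exact pe_symm h1

end BQF

theorem stmt16 (D : ℤ) (hD : IsDiscriminant D) (f : ℕ)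
    (hf : f.Prime) (hodd : Odd f) :
    ∃ pr : {Q : BQF // Q.IsPrimitive ∧ Q.disc = D * f ^ 2} →
          {q : BQF // q.IsPrimitive ∧ q.disc = D},
      (∀ Q, BQF.ProperEquiv ((pr Q).1.act (Rmat f f)) Q.1) ∧
      (∀ Q₁ Q₂, BQF.ProperEquiv Q₁.1 Q₂.1 → BQF.ProperEquiv (pr Q₁).1 (pr Q₂).1) ∧
      (∀ q : {q : BQF // q.IsPrimitive ∧ q.disc = D}, ∃ Q, BQF.ProperEquiv (pr Q).1 q.1) := by
  classical
  have hpF : Prime ((f : ℕ) : ℤ) := Nat.prime_iff_prime_int.mp hf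
  have hR : Rmat (f : ℤ) (f : ℤ) = !![1, 0; 0, (f : ℤ)] := by simp [Rmat]
  have key : ∀ Q : {Q : BQF // Q.IsPrimitive ∧ Q.disc = D * (f : ℤ) ^ 2},
      ∃ q : {q : BQF // q.IsPrimitive ∧ q.disc = D},
        BQF.ProperEquiv (q.1.act (Rmat (f : ℤ) (f : ℤ))) Q.1 := by
    intro Q
    obtain ⟨q, h1, h2, h3⟩ := BQF.step1 D f hf hodd Q.2.1 (by exact_mod_cast Q.2.2)
    exact ⟨⟨q, h1, h2⟩, by rw [hR]; exact h3⟩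
  choose pr hpr using key
  refine ⟨pr, hpr, ?_, ?_⟩
  · intro Q₁ Q₂ h
    have e1 := hpr Q₁
    have e2 := hpr Q₂
    rw [hR] at e1 e2
    have h12 : BQF.ProperEquiv ((pr Q₁).1.act !![1, 0; 0, (f : ℤ)])
        ((pr Q₂).1.act !![1, 0; 0, (f : ℤ)]) :=
      BQF.pe_trans e1 (BQF.pe_trans h (BQF.pe_symm e2))
    have hprim : ((pr Q₁).1.act !![1, 0; 0, (f : ℤ)]).IsPrimitive :=
      BQF.isPrimitive_pe (BQF.pe_symm e1) Q₁.2.1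
    exact BQF.descend hpF (BQF.not_dvd_a hpF hprim) h12
  · intro q
    obtain ⟨U, hU⟩ := BQF.exists_good hpF q.2.1
    set q'' := q.1.act U.1 with hq''
    have hq''p : q''.IsPrimitive := BQF.isPrimitive_pe ⟨U, rfl⟩ q.2.1
    have hq''d : q''.disc = D := by rw [hq'', BQF.disc_act, U.2, one_pow, one_mul, q.2.2]
    have hQp : (q''.act !![1, 0; 0, (f : ℤ)]).IsPrimitive := BQF.prim_act_R hpF hq''p hU
    have hQd : (q''.act !![1, 0; 0, (f : ℤ)]).disc = D * (f : ℤ) ^ 2 := by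
      rw [BQF.disc_act, Matrix.det_fin_two_of, hq''d]; ring
    refine ⟨⟨q''.act !![1, 0; 0, (f : ℤ)], hQp, by exact_mod_cast hQd⟩, ?_⟩
    set Qs : {Q : BQF // Q.IsPrimitive ∧ Q.disc = D * (f : ℤ) ^ 2} :=
      ⟨q''.act !![1, 0; 0, (f : ℤ)], hQp, by exact_mod_cast hQd⟩ with hQs
    have e := hpr Qs
    rw [hR] at e
    have hprim := BQF.isPrimitive_pe (BQF.pe_symm e) hQp
    have h1 : BQF.ProperEquiv (pr Qs).1 q'' := BQF.descend hpF (BQF.not_dvd_a hpF hprim) e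
    exact BQF.pe_trans h1 (BQF.pe_symm ⟨U, rfl⟩)
end
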